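/- Let ((ξ_i, ζ_i))_{i≥1} be i.i.d. copies of an ℕ₀²-valued random vector (ξ, ζ). For positive integers n and ℓ, P(∑_{i=1}^ℓ (ξ_i, ζ_i) = (ℓ−1, n−ℓ) and ∑_{i=1}^m ξ_i ≥ m for all m < ℓ) = (1/ℓ) P(∑_{i=1}^ℓ (ξ_i, ζ_i) = (ℓ−1, n−ℓ)). -/

import Mathlib

open MeasureTheory ProbabilityTheory Finset


lemma cycle_core (ℓ : ℕ) (hℓ : 0 < ℓ) (b : ℕ → ℕ) (hper : ∀ i, b (i + ℓ) = b i)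
    (hsum : ∑ i ∈ range ℓ, b i = ℓ - 1) :
    ∃! r, r < ℓ ∧ ∀ m < ℓ, m ≤ ∑ i ∈ range m, b (r + i) := by
  classical
  set S : ℕ → ℤ := fun m => (∑ i ∈ range m, (b i : ℤ)) - m with hSdef
  have hshift : ∀ k m : ℕ, S (k + m) = S k + (∑ i ∈ range m, (b (k + i) : ℤ)) - m := by
    intro k m
    simp only [hSdef, Finset.sum_range_add]
    push_cast
    ring
  have hGood_iff : ∀ r : ℕ, (∀ m < ℓ, m ≤ ∑ i ∈ range m, b (r + i)) ↔
      ∀ m < ℓ, S r ≤ S (r + m) := by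
    intro r
    refine forall₂_congr fun m hm => ?_
    rw [hshift r m]
    constructor
    · intro h
      have : (m : ℤ) ≤ ∑ i ∈ range m, (b (r + i) : ℤ) := by exact_mod_cast h
      linarith
    · intro h
      have : (m : ℤ) ≤ ∑ i ∈ range m, (b (r + i) : ℤ) := by linarith
      exact_mod_cast this
  have hps : ∀ k, ∑ i ∈ range ℓ, b (k + i) = ℓ - 1 := by
    intro k
    induction k with
    | zero => simpa using hsum
    | succ k ih =>
      have h1 : ∑ i ∈ range (ℓ + 1), b (k + i)
          = (∑ i ∈ range ℓ, b (k + i)) + b (k + ℓ) := sum_range_succ _ _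
      have h2 : ∑ i ∈ range (ℓ + 1), b (k + i)
          = (∑ i ∈ range ℓ, b (k + (i + 1))) + b (k + 0) := sum_range_succ' _ _
      have h5 : b (k + 0) = b k := by norm_num
      have h3 : ∑ i ∈ range ℓ, b (k + (i + 1)) = ∑ i ∈ range ℓ, b (k + 1 + i) := by
        refine sum_congr rfl fun i _ => by ring_nf
      have h4 : b (k + ℓ) = b k := hper k
      omega
  have hper' : ∀ k, S (k + ℓ) = S k - 1 := by
    intro k
    rw [hshift k ℓ]
    have : (∑ i ∈ range ℓ, (b (k + i) : ℤ)) = (ℓ : ℤ) - 1 := by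
      rw [← Nat.cast_sum, hps k, Nat.cast_sub hℓ, Nat.cast_one]
    rw [this]
    ring
  -- choose the first index attaining the minimum of S over range ℓ
  have hne : ((range ℓ).image S).Nonempty := (nonempty_range_iff.2 hℓ.ne').image S
  set V : ℤ := ((range ℓ).image S).min' hne with hV
  have hrex : ∃ r, r < ℓ ∧ S r = V := by
    obtain ⟨r, hr, hrV⟩ := Finset.mem_image.1 (Finset.min'_mem _ hne)
    exact ⟨r, mem_range.1 hr, hrV⟩
  set r : ℕ := Nat.find hrex with hrdef
  have hrℓ : r < ℓ := (Nat.find_spec hrex).1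
  have hrV : S r = V := (Nat.find_spec hrex).2
  have hmin : ∀ j < ℓ, V ≤ S j := fun j hj =>
    Finset.min'_le _ _ (Finset.mem_image_of_mem S (mem_range.2 hj))
  have hlt : ∀ j < r, V < S j := by
    intro j hj
    have hjℓ : j < ℓ := hj.trans hrℓ
    have hj' : j < Nat.find hrex := by rw [← hrdef]; exact hj
    have hne' : S j ≠ V := fun h => Nat.find_min hrex hj' ⟨hjℓ, h⟩
    exact lt_of_le_of_ne (hmin j hjℓ) (Ne.symm hne')
  have hgood : ∀ m < ℓ, S r ≤ S (r + m) := by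
    intro m hm
    rcases lt_or_ge (r + m) ℓ with h | h
    · rw [hrV]; exact hmin _ h
    · have hj : r + m - ℓ < r := by omega
      have heq : r + m = (r + m - ℓ) + ℓ := by omega
      rw [heq, hper' _]
      have h1 := hlt _ hj
      rw [hrV]
      linarith
  have huniq : ∀ u v, u < v → v < ℓ →
      (∀ m < ℓ, S u ≤ S (u + m)) → (∀ m < ℓ, S v ≤ S (v + m)) → False := by
    intro u v huv hvℓ hu hv
    have h1 : S u ≤ S v := by
      have := hu (v - u) (by omega)
      rwa [show u + (v - u) = v by omega] at this
    have h2 : S v ≤ S (u + ℓ) := by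
      have := hv (u + ℓ - v) (by omega)
      rwa [show v + (u + ℓ - v) = u + ℓ by omega] at this
    rw [hper' u] at h2
    omega
  refine ⟨r, ⟨hrℓ, (hGood_iff r).2 hgood⟩, ?_⟩
  rintro s ⟨hsℓ, hsgood⟩
  have hsg := (hGood_iff s).1 hsgood
  rcases lt_trichotomy s r with h | h | h
  · exact absurd (huniq s r h hrℓ hsg hgood) (fun x => x)
  · exact h
  · exact absurd (huniq r s h hsℓ hgood hsg) (fun x => x)

/-- **A two-dimensional cycle-lemma identity.** For i.i.d. copies `(ξᵢ, ζᵢ)` of an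
`ℕ₀²`-valued random vector, and positive integers `ℓ ≤ n`,
`P(∑_{i=1}^ℓ (ξᵢ, ζᵢ) = (ℓ−1, n−ℓ) and ∑_{i=1}^m ξᵢ ≥ m for all m < ℓ)
  = (1/ℓ) · P(∑_{i=1}^ℓ (ξᵢ, ζᵢ) = (ℓ−1, n−ℓ))`. -/
theorem cycle_lemma_two_dim {Ω : Type*} [MeasurableSpace Ω] (μ : Measure Ω)
    [IsProbabilityMeasure μ] (ξ ζ : ℕ → Ω → ℕ)
    (hmeasξ : ∀ i, Measurable (ξ i)) (hmeasζ : ∀ i, Measurable (ζ i))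
    (hindep : iIndepFun
      (fun i => fun ω => (ξ i ω, ζ i ω)) μ)
    (hident : ∀ i, IdentDistrib (fun ω => (ξ i ω, ζ i ω))
      (fun ω => (ξ 0 ω, ζ 0 ω)) μ μ)
    (n ℓ : ℕ) (hℓ : 1 ≤ ℓ) (hn : ℓ ≤ n) :
    (μ {ω | (∑ i ∈ range ℓ, ξ i ω = ℓ - 1) ∧ (∑ i ∈ range ℓ, ζ i ω = n - ℓ) ∧
            ∀ m < ℓ, m ≤ ∑ i ∈ range m, ξ i ω}).toReal =
      (1 / ℓ) *
        (μ {ω | (∑ i ∈ range ℓ, ξ i ω = ℓ - 1) ∧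
                (∑ i ∈ range ℓ, ζ i ω = n - ℓ)}).toReal := by
  classical
  have hℓpos : 0 < ℓ := hℓ
  haveI : NeZero ℓ := ⟨hℓpos.ne'⟩
  -- the random vector of the first ℓ pairs
  set X : Ω → (Fin ℓ → ℕ × ℕ) := fun ω i => (ξ i ω, ζ i ω) with hXdef
  set p : ℕ × ℕ → ENNReal := fun v => μ ((fun ω => (ξ 0 ω, ζ 0 ω)) ⁻¹' {v}) with hpdef
  set w : (Fin ℓ → ℕ × ℕ) → ENNReal := fun a => ∏ i : Fin ℓ, p (a i) with hwdef
  have Ymeas : ∀ i : ℕ, Measurable (fun ω => (ξ i ω, ζ i ω)) :=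
    fun i => (hmeasξ i).prodMk (hmeasζ i)
  -- single-point preimages
  have hXfiber : ∀ a : Fin ℓ → ℕ × ℕ,
      X ⁻¹' {a} = ⋂ j : Fin ℓ, (fun ω => (ξ j ω, ζ j ω)) ⁻¹' {a j} := by
    intro a
    ext ω
    simp only [Set.mem_preimage, Set.mem_singleton_iff, Set.mem_iInter, funext_iff, hXdef]
  have hXsingle_meas : ∀ a : Fin ℓ → ℕ × ℕ, MeasurableSet (X ⁻¹' {a}) := by
    intro a
    rw [hXfiber a]
    exact MeasurableSet.iInter fun j => Ymeas j (measurableSet_singleton _)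
  have hXA : ∀ A : Set (Fin ℓ → ℕ × ℕ), MeasurableSet (X ⁻¹' A) := by
    intro A
    have : X ⁻¹' A = ⋃ a : A, X ⁻¹' {(a : Fin ℓ → ℕ × ℕ)} := by
      ext ω
      simp only [Set.mem_preimage, Set.mem_iUnion, Set.mem_singleton_iff, Subtype.exists,
        exists_prop]
      exact ⟨fun h => ⟨X ω, h, rfl⟩, fun ⟨a, ha, h⟩ => h ▸ ha⟩
    rw [this]
    exact MeasurableSet.iUnion fun a => hXsingle_meas _
  -- the weight of a single point
  have hsingle : ∀ a : Fin ℓ → ℕ × ℕ, μ (X ⁻¹' {a}) = w a := by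
    intro a
    set sets : ℕ → Set (ℕ × ℕ) := fun i =>
      if h : i < ℓ then {a ⟨i, h⟩} else Set.univ with hsets
    have hset : X ⁻¹' {a} = ⋂ i ∈ Finset.range ℓ, (fun ω => (ξ i ω, ζ i ω)) ⁻¹' sets i := by
      rw [hXfiber a]
      ext ω
      simp only [Set.mem_iInter, Set.mem_preimage, mem_range, hsets]
      constructor
      · intro h i hi
        simp only [dif_pos hi]
        exact h ⟨i, hi⟩
      · intro h j
        have := h j.val j.isLt
        simpa only [dif_pos j.isLt, Fin.eta] using this
    have hmeas_sets : ∀ i, i ∈ Finset.range ℓ → MeasurableSet (sets i) := by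
      intro i _
      simp only [hsets]
      split <;> simp
    rw [hset, hindep.measure_inter_preimage_eq_mul (Finset.range ℓ) hmeas_sets]
    have hterm : ∀ i ∈ Finset.range ℓ,
        μ ((fun ω => (ξ i ω, ζ i ω)) ⁻¹' sets i) = p (a ⟨i % ℓ, Nat.mod_lt _ hℓpos⟩) := by
      intro i hi
      have hiℓ : i < ℓ := mem_range.1 hi
      have h1 : sets i = {a ⟨i, hiℓ⟩} := dif_pos hiℓ
      have h2 : (⟨i % ℓ, Nat.mod_lt _ hℓpos⟩ : Fin ℓ) = ⟨i, hiℓ⟩ :=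
        Fin.ext (Nat.mod_eq_of_lt hiℓ)
      rw [h1, h2]
      exact (hident i).measure_mem_eq (measurableSet_singleton _)
    rw [Finset.prod_congr rfl hterm, hwdef]
    rw [← Fin.prod_univ_eq_prod_range (fun i => p (a ⟨i % ℓ, Nat.mod_lt _ hℓpos⟩)) ℓ]
    refine Finset.prod_congr rfl fun j _ => ?_
    exact congrArg (fun t : Fin ℓ => p (a t)) (Fin.ext (by simp [Nat.mod_eq_of_lt j.isLt]))
  -- measures as sums of weights
  have hμA : ∀ A : Set (Fin ℓ → ℕ × ℕ), μ (X ⁻¹' A) = ∑' a : A, w a := by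
    intro A
    have hU : X ⁻¹' A = ⋃ a : A, X ⁻¹' {(a : Fin ℓ → ℕ × ℕ)} := by
      ext ω
      simp only [Set.mem_preimage, Set.mem_iUnion, Set.mem_singleton_iff, Subtype.exists,
        exists_prop]
      exact ⟨fun h => ⟨X ω, h, rfl⟩, fun ⟨a, ha, h⟩ => h ▸ ha⟩
    rw [hU, measure_iUnion ?_ fun a => hXsingle_meas _]
    · exact tsum_congr fun a => hsingle _
    · intro a a' haa'
      refine Set.disjoint_left.2 fun ω h h' => haa' ?_
      exact Subtype.ext ((Set.mem_singleton_iff.1 h).symm.trans (Set.mem_singleton_iff.1 h'))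
  -- target sets
  set Bset : Set (Fin ℓ → ℕ × ℕ) := {a | (∑ i : Fin ℓ, (a i).1 = ℓ - 1) ∧
    (∑ i : Fin ℓ, (a i).2 = n - ℓ)} with hBdef
  set Cset : Set (Fin ℓ → ℕ × ℕ) :=
    {a | ∀ m < ℓ, m ≤ ∑ i ∈ range m, (a ⟨i % ℓ, Nat.mod_lt _ hℓpos⟩).1} with hCdef
  -- rewriting the events
  have hsum1 : ∀ ω, ∑ i : Fin ℓ, (X ω i).1 = ∑ i ∈ range ℓ, ξ i ω :=
    fun ω => Fin.sum_univ_eq_sum_range (fun i => ξ i ω) ℓ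
  have hsum2 : ∀ ω, ∑ i : Fin ℓ, (X ω i).2 = ∑ i ∈ range ℓ, ζ i ω :=
    fun ω => Fin.sum_univ_eq_sum_range (fun i => ζ i ω) ℓ
  have hsum3 : ∀ (ω) (m : ℕ), m < ℓ →
      ∑ i ∈ range m, (X ω ⟨i % ℓ, Nat.mod_lt _ hℓpos⟩).1 = ∑ i ∈ range m, ξ i ω := by
    intro ω m hm
    refine Finset.sum_congr rfl fun i hi => ?_
    have hiℓ : i < ℓ := (mem_range.1 hi).trans hm
    have : (⟨i % ℓ, Nat.mod_lt _ hℓpos⟩ : Fin ℓ) = ⟨i, hiℓ⟩ := Fin.ext (Nat.mod_eq_of_lt hiℓ)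
    rw [this]
  have hE2 : {ω | (∑ i ∈ range ℓ, ξ i ω = ℓ - 1) ∧ (∑ i ∈ range ℓ, ζ i ω = n - ℓ)}
      = X ⁻¹' Bset := by
    ext ω
    simp only [Set.mem_setOf_eq, Set.mem_preimage, hBdef, hsum1 ω, hsum2 ω]
  have hE1 : {ω | (∑ i ∈ range ℓ, ξ i ω = ℓ - 1) ∧ (∑ i ∈ range ℓ, ζ i ω = n - ℓ) ∧
      ∀ m < ℓ, m ≤ ∑ i ∈ range m, ξ i ω} = X ⁻¹' (Bset ∩ Cset) := by
    ext ω
    simp only [Set.mem_setOf_eq, Set.mem_preimage, Set.mem_inter_iff, hBdef, hCdef,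
      hsum1 ω, hsum2 ω]
    constructor
    · rintro ⟨h1, h2, h3⟩
      exact ⟨⟨h1, h2⟩, fun m hm => (hsum3 ω m hm).symm ▸ h3 m hm⟩
    · rintro ⟨⟨h1, h2⟩, h3⟩
      exact ⟨h1, h2, fun m hm => (hsum3 ω m hm) ▸ h3 m hm⟩
  -- rotations
  set R : Fin ℓ → (Fin ℓ → ℕ × ℕ) ≃ (Fin ℓ → ℕ × ℕ) := fun r =>
    Equiv.arrowCongr (Equiv.addRight r).symm (Equiv.refl (ℕ × ℕ)) with hRdef
  have hR : ∀ (r : Fin ℓ) (a : Fin ℓ → ℕ × ℕ) (j : Fin ℓ), R r a j = a (j + r) := by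
    intro r a j
    simp [hRdef, Equiv.arrowCongr]
  have hw_inv : ∀ (r : Fin ℓ) (a : Fin ℓ → ℕ × ℕ), w (R r a) = w a := by
    intro r a
    simp only [hwdef]
    calc ∏ i : Fin ℓ, p (R r a i) = ∏ i : Fin ℓ, p (a (i + r)) := by
          exact Finset.prod_congr rfl fun i _ => by rw [hR]
      _ = ∏ i : Fin ℓ, p (a i) := Equiv.prod_comp (Equiv.addRight r) (fun j => p (a j))
  have hB_inv : ∀ (r : Fin ℓ) (a : Fin ℓ → ℕ × ℕ), (a ∈ Bset ↔ R r a ∈ Bset) := by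
    intro r a
    have h1 : ∑ i : Fin ℓ, (R r a i).1 = ∑ i : Fin ℓ, (a i).1 := by
      calc ∑ i : Fin ℓ, (R r a i).1 = ∑ i : Fin ℓ, (a (i + r)).1 :=
            Finset.sum_congr rfl fun i _ => by rw [hR]
        _ = _ := Equiv.sum_comp (Equiv.addRight r) (fun j => (a j).1)
    have h2 : ∑ i : Fin ℓ, (R r a i).2 = ∑ i : Fin ℓ, (a i).2 := by
      calc ∑ i : Fin ℓ, (R r a i).2 = ∑ i : Fin ℓ, (a (i + r)).2 :=
            Finset.sum_congr rfl fun i _ => by rw [hR]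
        _ = _ := Equiv.sum_comp (Equiv.addRight r) (fun j => (a j).2)
    simp only [hBdef, Set.mem_setOf_eq, h1, h2]
  -- the cycle lemma
  have hcycle : ∀ a ∈ Bset, ∃! r : Fin ℓ, R r a ∈ Cset := by
    intro a ha
    set b : ℕ → ℕ := fun i => (a ⟨i % ℓ, Nat.mod_lt _ hℓpos⟩).1 with hbdef
    have hper : ∀ i, b (i + ℓ) = b i := fun i =>
      congrArg (fun t : Fin ℓ => (a t).1) (Fin.ext (Nat.add_mod_right i ℓ))
    have hsumb : ∑ i ∈ range ℓ, b i = ℓ - 1 := by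
      rw [← Fin.sum_univ_eq_sum_range b ℓ]
      rw [show ∑ j : Fin ℓ, b j.val = ∑ j : Fin ℓ, (a j).1 from
        Finset.sum_congr rfl fun j _ =>
          congrArg (fun t : Fin ℓ => (a t).1) (Fin.ext (by simp [Nat.mod_eq_of_lt j.isLt]))]
      exact ha.1
    have hidx : ∀ (r' : Fin ℓ) (i : ℕ),
        ((⟨i % ℓ, Nat.mod_lt _ hℓpos⟩ : Fin ℓ) + r') = ⟨(r'.val + i) % ℓ, Nat.mod_lt _ hℓpos⟩ := by
      intro r' i
      apply Fin.ext
      rw [Fin.add_def]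
      show (i % ℓ + r'.val) % ℓ = (r'.val + i) % ℓ
      rw [Nat.mod_add_mod, Nat.add_comm]
    have hCmem : ∀ r' : Fin ℓ,
        (R r' a ∈ Cset ↔ ∀ m < ℓ, m ≤ ∑ i ∈ range m, b (r'.val + i)) := by
      intro r'
      simp only [hCdef, Set.mem_setOf_eq]
      refine forall₂_congr fun m hm => ?_
      have : ∀ i ∈ range m, (R r' a ⟨i % ℓ, Nat.mod_lt _ hℓpos⟩).1 = b (r'.val + i) := by
        intro i _
        rw [hR, hidx]
      rw [Finset.sum_congr rfl this]
    obtain ⟨r, ⟨hrℓ, hrgood⟩, hruniq⟩ := cycle_core ℓ hℓpos b hper hsumb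
    refine ⟨⟨r, hrℓ⟩, (hCmem ⟨r, hrℓ⟩).2 hrgood, ?_⟩
    intro s hs
    exact Fin.ext (hruniq s.val ⟨s.isLt, (hCmem s).1 hs⟩)
  -- rotation invariance of the constrained measures
  have key_r : ∀ r : Fin ℓ,
      μ (X ⁻¹' (Bset ∩ {a | R r a ∈ Cset})) = μ (X ⁻¹' (Bset ∩ Cset)) := by
    intro r
    rw [hμA, hμA]
    have hiff : ∀ a : Fin ℓ → ℕ × ℕ,
        a ∈ Bset ∩ {a | R r a ∈ Cset} ↔ (R r) a ∈ Bset ∩ Cset := by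
      intro a
      simp only [Set.mem_inter_iff, Set.mem_setOf_eq]
      exact and_congr_left' (hB_inv r a)
    set e : ↥(Bset ∩ {a | R r a ∈ Cset}) ≃ ↥(Bset ∩ Cset) := (R r).subtypeEquiv hiff with hedef
    rw [← Equiv.tsum_eq e (fun y : ↥(Bset ∩ Cset) => w y)]
    refine tsum_congr fun x => ?_
    have h : ((e x : Fin ℓ → ℕ × ℕ)) = R r (x : Fin ℓ → ℕ × ℕ) := rfl
    rw [h]
    exact (hw_inv r x).symm
  -- covering and disjointness
  have hcover : X ⁻¹' Bset = ⋃ r : Fin ℓ, X ⁻¹' (Bset ∩ {a | R r a ∈ Cset}) := by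
    ext ω
    constructor
    · intro hω
      have hb : X ω ∈ Bset := hω
      obtain ⟨r, hr, -⟩ := hcycle (X ω) hb
      exact Set.mem_iUnion.2 ⟨r, ⟨hb, hr⟩⟩
    · intro hω
      obtain ⟨r, hr⟩ := Set.mem_iUnion.1 hω
      exact hr.1
  have hdisj : Pairwise (Function.onFun Disjoint
      fun r : Fin ℓ => X ⁻¹' (Bset ∩ {a | R r a ∈ Cset})) := by
    intro r s hrs
    refine Set.disjoint_left.2 fun ω h1 h2 => hrs ?_
    have h1' : X ω ∈ Bset ∧ R r (X ω) ∈ Cset := h1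
    have h2' : X ω ∈ Bset ∧ R s (X ω) ∈ Cset := h2
    obtain ⟨r₀, -, hu⟩ := hcycle (X ω) h1'.1
    exact (hu r h1'.2).trans (hu s h2'.2).symm
  -- putting it together
  have hmain : μ (X ⁻¹' Bset) = (ℓ : ENNReal) * μ (X ⁻¹' (Bset ∩ Cset)) := by
    rw [hcover, measure_iUnion hdisj fun r => hXA _, tsum_fintype]
    rw [Finset.sum_congr rfl fun r _ => key_r r, Finset.sum_const, Finset.card_univ,
      Fintype.card_fin, nsmul_eq_mul]
  rw [hE1, hE2, hmain, ENNReal.toReal_mul, ENNReal.toReal_natCast]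
  have hne : (ℓ : ℝ) ≠ 0 := Nat.cast_ne_zero.2 hℓpos.ne'
  field_simp
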